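/- Let M be a real N×N matrix and k ∈ ℝ such that ker(M − k·I) = ker(Mᵀ − k·I) = {α𝟙 : α ∈ ℝ}, and let m_M(x) be the minimal polynomial of M over ℝ. Then (x − k) divides m_M(x), and setting q(x) = m_M(x)/(x − k), one has q(M) = (q(k)/N)·𝟙𝟙ᵀ with q(k) ≠ 0. -/

import Mathlib

open Polynomial Matrix

/-- If the eigenspaces of `M` and `Mᵀ` for the eigenvalue `k` are both exactly
the span of the all-ones vector `𝟙`, then `(x - k)` divides the minimal
polynomial `m_M` of `M`, and the quotient `q = m_M/(x - k)` satisfies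
`q(M) = (q(k)/N)·𝟙𝟙ᵀ` with `q(k) ≠ 0`. -/
theorem quotient_of_minpoly_eval_eq_ones {N : ℕ} (hN : 0 < N)
    (M : Matrix (Fin N) (Fin N) ℝ) (k : ℝ)
    (hker : ∀ v : Fin N → ℝ, M.mulVec v = k • v ↔ ∃ α : ℝ, v = fun _ => α)
    (hkerT : ∀ v : Fin N → ℝ, Mᵀ.mulVec v = k • v ↔ ∃ α : ℝ, v = fun _ => α) :
    (X - C k) ∣ minpoly ℝ M ∧
    Polynomial.aeval M (minpoly ℝ M /ₘ (X - C k)) =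
      (((minpoly ℝ M /ₘ (X - C k)).eval k) / N) • Matrix.of (fun _ _ => (1 : ℝ)) ∧
    (minpoly ℝ M /ₘ (X - C k)).eval k ≠ 0 := by
  have i0 : Fin N := ⟨0, hN⟩
  have hint : IsIntegral ℝ M := IsIntegral.of_finite ℝ M
  have h1 : M.mulVec (fun _ => (1:ℝ)) = fun _ => k := by
    have := (hker (fun _ => (1:ℝ))).mpr ⟨1, rfl⟩
    rw [this]; funext i; simp
  -- key: aeval of any polynomial acts on ones by eval at k
  have key : ∀ p : ℝ[X], (Polynomial.aeval M p).mulVec (fun _ => (1:ℝ)) = fun _ => p.eval k := by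
    intro p
    induction p using Polynomial.induction_on' with
    | add p q hp hq => simp [add_mulVec, hp, hq]; rfl
    | monomial n a =>
      have pow : ∀ n : ℕ, (M^n).mulVec (fun _ => (1:ℝ)) = fun _ => k^n := by
        intro n
        induction n with
        | zero => funext i; simp [one_mulVec]
        | succ n ih =>
          rw [pow_succ', ← Matrix.mulVec_mulVec, ih]
          have : (fun _ : Fin N => k^n) = (k^n) • (fun _ : Fin N => (1:ℝ)) := by
            funext i; simp
          rw [this, Matrix.mulVec_smul, h1]
          funext i; simp [pow_succ', mul_comm]
      funext i
      simp [aeval_monomial, Algebra.algebraMap_eq_smul_one, smul_mul_assoc, one_mul,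
        Matrix.smul_mulVec, pow]
  have onesnz : (fun _ : Fin N => (1:ℝ)) ≠ 0 := by
    intro h; exact one_ne_zero (congrFun h i0)
  have hroot : (minpoly ℝ M).IsRoot k := by
    have := key (minpoly ℝ M)
    rw [minpoly.aeval, Matrix.zero_mulVec] at this
    have := congrFun this.symm i0
    simpa [IsRoot] using this
  have hdvd : (X - C k) ∣ minpoly ℝ M := dvd_iff_isRoot.mpr hroot
  set q : ℝ[X] := minpoly ℝ M /ₘ (X - C k) with hq
  have hfac : (X - C k) * q = minpoly ℝ M := mul_divByMonic_eq_iff_isRoot.mpr hroot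
  set A : Matrix (Fin N) (Fin N) ℝ := Polynomial.aeval M q with hA
  have hMA : M * A = k • A := by
    have h0 : (M - k • 1) * A = 0 := by
      have : Polynomial.aeval M ((X - C k) * q) = 0 := by rw [hfac, minpoly.aeval]
      simpa [_root_.map_mul, _root_.map_sub, aeval_X, aeval_C, Algebra.algebraMap_eq_smul_one] using this
    have h1' : M * A - (k • (1:Matrix (Fin N) (Fin N) ℝ)) * A = 0 := by rw [← sub_mul]; exact h0
    have h2' : M * A = (k • (1:Matrix (Fin N) (Fin N) ℝ)) * A := sub_eq_zero.mp h1'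
    rw [h2', smul_mul_assoc, one_mul]
  have hAM : A * M = k • A := by
    have h0 : A * (M - k • 1) = 0 := by
      have : Polynomial.aeval M (q * (X - C k)) = 0 := by rw [mul_comm, hfac, minpoly.aeval]
      simpa [_root_.map_mul, _root_.map_sub, aeval_X, aeval_C, Algebra.algebraMap_eq_smul_one] using this
    have h1' : A * M - A * (k • (1:Matrix (Fin N) (Fin N) ℝ)) = 0 := by rw [← mul_sub]; exact h0
    have h2' : A * M = A * (k • (1:Matrix (Fin N) (Fin N) ℝ)) := sub_eq_zero.mp h1'
    rw [h2', mul_smul_comm, mul_one]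
  have hcol : ∀ j, ∃ α : ℝ, (fun i => A i j) = fun _ => α := by
    intro j
    apply (hker _).mp
    funext i
    have := congrFun (congrFun hMA i) j
    simpa [Matrix.mul_apply, Matrix.mulVec, dotProduct] using this
  have hrow : ∀ i, ∃ α : ℝ, (fun j => A i j) = fun _ => α := by
    intro i
    apply (hkerT _).mp
    funext j
    have := congrFun (congrFun hAM i) j
    simpa [Matrix.mul_apply, Matrix.mulVec, dotProduct, Matrix.transpose_apply,
      mul_comm] using this
  set c : ℝ := A i0 i0 with hc
  have hconst : ∀ i j, A i j = c := by
    intro i j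
    obtain ⟨α, hα⟩ := hcol j
    obtain ⟨β, hβ⟩ := hrow i0
    have e1 : A i j = α := congrFun hα i
    have e2 : A i0 j = α := congrFun hα i0
    have e3 : A i0 j = β := congrFun hβ j
    have e4 : A i0 i0 = β := congrFun hβ i0
    rw [e1, ← e2, e3, ← e4]
  have hsum : (N : ℝ) * c = q.eval k := by
    have := congrFun (key q) i0
    rw [← hA] at this
    simp only [Matrix.mulVec, dotProduct, mul_one] at this
    rw [← this]
    rw [Finset.sum_congr rfl (fun j _ => hconst i0 j)]
    simp [mul_comm]
  have hNne : (N : ℝ) ≠ 0 := Nat.cast_ne_zero.mpr hN.ne'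
  have hcval : c = q.eval k / N := by rw [eq_div_iff hNne, mul_comm]; exact hsum
  have hAeq : Polynomial.aeval M q = (q.eval k / N) • Matrix.of (fun _ _ => (1:ℝ)) := by
    rw [← hA]
    funext i j
    simp [Matrix.smul_apply, hconst i j, hcval]
  have hne : q.eval k ≠ 0 := by
    intro h0
    have hA0 : Polynomial.aeval M q = 0 := by
      rw [hAeq, h0]; simp
    have hqne : q ≠ 0 := by
      intro h
      exact minpoly.ne_zero hint (by rw [← hfac, h, mul_zero])
    have hdvd2 : minpoly ℝ M ∣ q := minpoly.dvd ℝ M hA0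
    have hle : (minpoly ℝ M).natDegree ≤ q.natDegree := natDegree_le_of_dvd hdvd2 hqne
    have hdeg : (minpoly ℝ M).natDegree = 1 + q.natDegree := by
      rw [← hfac, natDegree_mul (X_sub_C_ne_zero k) hqne, natDegree_X_sub_C]
    omega
  exact ⟨hdvd, hAeq, hne⟩
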